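/- arXiv:1106.1336 — 2 statements merged into one kernel-verified Lean document; each statement's English description precedes it below -/
import Mathlib

section
/- The graph G_3 is 4-critical: G_3 has chromatic number 4, and for every edge e of G_3 the graph obtained by deleting e has chromatic number at most 3. -/
/-- `G₃`, the cube with one corner cut off: with vertices labelled
`x = 0, y = 1, z = 2, p = 3, q = 4, r = 5, w = 6`, its edges are
`xy, xz, yz, px, py, qx, qz, ry, rz, wp, wq, wr`. -/
def G3 : SimpleGraph (Fin 7) :=
  SimpleGraph.fromEdgeSet
    {s(0, 1), s(0, 2), s(1, 2), s(3, 0), s(3, 1), s(4, 0), s(4, 2),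
     s(5, 1), s(5, 2), s(6, 3), s(6, 4), s(6, 5)}

/-- Explicit decidable description of the adjacency relation of `G3`. -/
def adjP (a b : Fin 7) : Prop :=
  ((a = 0 ∧ b = 1 ∨ a = 1 ∧ b = 0) ∨
        (a = 0 ∧ b = 2 ∨ a = 2 ∧ b = 0) ∨
          (a = 1 ∧ b = 2 ∨ a = 2 ∧ b = 1) ∨
            (a = 3 ∧ b = 0 ∨ a = 0 ∧ b = 3) ∨
              (a = 3 ∧ b = 1 ∨ a = 1 ∧ b = 3) ∨
                (a = 4 ∧ b = 0 ∨ a = 0 ∧ b = 4) ∨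
                  (a = 4 ∧ b = 2 ∨ a = 2 ∧ b = 4) ∨
                    (a = 5 ∧ b = 1 ∨ a = 1 ∧ b = 5) ∨
                      (a = 5 ∧ b = 2 ∨ a = 2 ∧ b = 5) ∨
                        (a = 6 ∧ b = 3 ∨ a = 3 ∧ b = 6) ∨
                          (a = 6 ∧ b = 4 ∨ a = 4 ∧ b = 6) ∨ a = 6 ∧ b = 5 ∨ a = 5 ∧ b = 6) ∧
      a ≠ b

instance adjP.decidable (a b : Fin 7) : Decidable (adjP a b) := by
  unfold adjP; infer_instance

lemma G3_adj (a b : Fin 7) : G3.Adj a b ↔ adjP a b := by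
  simp only [G3, adjP, SimpleGraph.fromEdgeSet_adj, Set.mem_insert_iff, Set.mem_singleton_iff,
    Sym2.eq, Sym2.rel_iff', Prod.mk.injEq, Prod.swap_prod_mk]

set_option synthInstance.maxSize 1000 in
set_option maxHeartbeats 1000000 in
lemma col4 : G3.Colorable 4 := by
  refine ⟨SimpleGraph.Coloring.mk ![0, 1, 2, 2, 1, 0, 3] ?_⟩
  intro a b h
  rw [G3_adj] at h
  revert h
  revert a b
  decide

set_option synthInstance.maxSize 1000 in
set_option maxHeartbeats 1000000 in
lemma not_col3 : ¬ G3.Colorable 3 := by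
  rintro ⟨C⟩
  have h : ∀ a b : Fin 7, adjP a b → C a ≠ C b := fun a b hab => C.valid ((G3_adj a b).mpr hab)
  have key : ∀ (c0 c1 c2 c3 c4 c5 c6 : Fin 3),
      ¬(c0 ≠ c1 ∧ c0 ≠ c2 ∧ c1 ≠ c2 ∧ c3 ≠ c0 ∧ c3 ≠ c1 ∧ c4 ≠ c0 ∧ c4 ≠ c2 ∧ c5 ≠ c1 ∧
        c5 ≠ c2 ∧ c6 ≠ c3 ∧ c6 ≠ c4 ∧ c6 ≠ c5) := by decide
  exact key (C 0) (C 1) (C 2) (C 3) (C 4) (C 5) (C 6)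
    ⟨h 0 1 (by decide), h 0 2 (by decide), h 1 2 (by decide), h 3 0 (by decide),
     h 3 1 (by decide), h 4 0 (by decide), h 4 2 (by decide), h 5 1 (by decide),
     h 5 2 (by decide), h 6 3 (by decide), h 6 4 (by decide), h 6 5 (by decide)⟩

set_option synthInstance.maxSize 1000 in
set_option maxHeartbeats 1000000 in
lemma del_col (a0 b0 : Fin 7) (f : Fin 7 → Fin 3)
    (hf : ∀ a b : Fin 7, adjP a b → ¬(a = a0 ∧ b = b0 ∨ a = b0 ∧ b = a0) → f a ≠ f b) :
    (G3.deleteEdges {s(a0, b0)}).Colorable 3 := by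
  refine ⟨SimpleGraph.Coloring.mk f ?_⟩
  intro a b hab
  rw [SimpleGraph.deleteEdges_adj, G3_adj] at hab
  refine hf a b hab.1 ?_
  have := hab.2
  simpa [Sym2.eq, Sym2.rel_iff', Prod.ext_iff] using this

set_option synthInstance.maxSize 1000 in
set_option maxHeartbeats 1000000 in
/-- The graph `G₃` is `4`-critical: it has chromatic number `4`, and deleting any single
edge yields a graph with chromatic number at most `3`. -/
theorem G3_four_critical :
    G3.chromaticNumber = 4 ∧
      ∀ e ∈ G3.edgeSet, (G3.deleteEdges {e}).chromaticNumber ≤ 3 := by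
  constructor
  · refine le_antisymm (by exact_mod_cast col4.chromaticNumber_le) ?_
    by_contra hlt
    push_neg at hlt
    have h3 : G3.chromaticNumber ≤ 3 := Order.le_of_lt_add_one (by exact_mod_cast hlt)
    exact not_col3 (SimpleGraph.chromaticNumber_le_iff_colorable.mp (by exact_mod_cast h3))
  · intro e he
    rw [show (3 : ℕ∞) = ((3 : ℕ) : ℕ∞) by norm_num,
      SimpleGraph.chromaticNumber_le_iff_colorable]
    rw [G3, SimpleGraph.edgeSet_fromEdgeSet, Set.mem_diff] at he
    obtain ⟨hmem, -⟩ := he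
    simp only [Set.mem_insert_iff, Set.mem_singleton_iff] at hmem
    rcases hmem with rfl | rfl | rfl | rfl | rfl | rfl | rfl | rfl | rfl | rfl | rfl | rfl
    · exact del_col 0 1 ![0, 0, 1, 1, 2, 2, 0] (by decide)
    · exact del_col 0 2 ![0, 1, 0, 2, 1, 2, 0] (by decide)
    · exact del_col 1 2 ![0, 1, 1, 2, 2, 0, 1] (by decide)
    · exact del_col 3 0 ![0, 1, 2, 0, 1, 0, 2] (by decide)
    · exact del_col 3 1 ![0, 1, 2, 1, 1, 0, 2] (by decide)
    · exact del_col 4 0 ![0, 1, 2, 2, 0, 0, 1] (by decide)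
    · exact del_col 4 2 ![0, 1, 2, 2, 2, 0, 1] (by decide)
    · exact del_col 5 1 ![0, 1, 2, 2, 1, 1, 0] (by decide)
    · exact del_col 5 2 ![0, 1, 2, 2, 1, 2, 0] (by decide)
    · exact del_col 6 3 ![0, 1, 2, 2, 1, 0, 2] (by decide)
    · exact del_col 6 4 ![0, 1, 2, 2, 1, 0, 1] (by decide)
    · exact del_col 6 5 ![0, 1, 2, 2, 1, 0, 0] (by decide)
end

section
/- The graph K_{3,3} minus one edge (K_{3,3}^-) is a minor of the graph G_3. -/
/-- `H` is a minor of `G`: there are disjoint connected branch sets in `G`, one for each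
vertex of `H`, such that every edge of `H` is realized by an edge of `G` between the
corresponding branch sets. -/
def IsMinor {β α : Type*} (H : SimpleGraph β) (G : SimpleGraph α) : Prop :=
  ∃ f : α → Option β,
    (∀ b : β, ∃ a : α, f a = some b) ∧
    (∀ b : β, (G.induce {a : α | f a = some b}).Connected) ∧
    (∀ b₁ b₂ : β, H.Adj b₁ b₂ →
      ∃ a₁ a₂ : α, f a₁ = some b₁ ∧ f a₂ = some b₂ ∧ G.Adj a₁ a₂)

/-- `K₃,₃` with one edge removed. -/
def K33minus : SimpleGraph (Fin 3 ⊕ Fin 3) :=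
  (completeBipartiteGraph (Fin 3) (Fin 3)).deleteEdges {s(Sum.inl 0, Sum.inr 0)}


lemma G3_adj_s7 {a b : Fin 7}
    (h : s(a, b) ∈ ({s(0, 1), s(0, 2), s(1, 2), s(3, 0), s(3, 1), s(4, 0), s(4, 2),
      s(5, 1), s(5, 2), s(6, 3), s(6, 4), s(6, 5)} : Set (Sym2 (Fin 7)))) (hne : a ≠ b) :
    G3.Adj a b := by
  rw [G3, SimpleGraph.fromEdgeSet_adj]
  exact ⟨h, hne⟩

instance : DecidableRel G3.Adj := fun a b =>
  decidable_of_iff (s(a, b) ∈ ({s(0, 1), s(0, 2), s(1, 2), s(3, 0), s(3, 1), s(4, 0), s(4, 2),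
      s(5, 1), s(5, 2), s(6, 3), s(6, 4), s(6, 5)} : Finset (Sym2 (Fin 7))) ∧ a ≠ b) (by
    rw [G3, SimpleGraph.fromEdgeSet_adj]
    simp)

instance : DecidableRel K33minus.Adj := fun a b =>
  decidable_of_iff ((a.isLeft ∧ b.isRight ∨ a.isRight ∧ b.isLeft) ∧
      ¬ s(a, b) = s(Sum.inl 0, Sum.inr 0)) (by
    rw [K33minus, SimpleGraph.deleteEdges_adj]
    exact Iff.rfl)

lemma induce_connected_singleton {α : Type*} (G : SimpleGraph α) (a : α) :
    (G.induce ({a} : Set α)).Connected := by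
  rw [SimpleGraph.connected_iff]
  refine ⟨fun u v => ?_, ⟨⟨a, rfl⟩⟩⟩
  have : u = v := Subtype.ext (u.2.trans v.2.symm)
  rw [this]

lemma induce_connected_pair {α : Type*} (G : SimpleGraph α) {a b : α} (hab : G.Adj a b) :
    (G.induce ({a, b} : Set α)).Connected := by
  rw [SimpleGraph.connected_iff]
  refine ⟨fun u v => ?_, ⟨⟨a, Or.inl rfl⟩⟩⟩
  have hr : (G.induce ({a, b} : Set α)).Reachable ⟨a, Or.inl rfl⟩ ⟨b, Or.inr rfl⟩ :=
    SimpleGraph.Adj.reachable hab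
  have key : ∀ w : ({a, b} : Set α), w = ⟨a, Or.inl rfl⟩ ∨ w = ⟨b, Or.inr rfl⟩ := by
    rintro ⟨w, hw | hw⟩
    · exact Or.inl (Subtype.ext hw)
    · exact Or.inr (Subtype.ext hw)
  rcases key u with h1 | h1 <;> rcases key v with h2 | h2 <;> rw [h1, h2] <;>
    first
    | exact SimpleGraph.Reachable.refl _
    | exact hr
    | exact hr.symm

/-- The branch-set assignment realizing `K₃,₃⁻` inside `G₃`. -/
def f7 : Fin 7 → Option (Fin 3 ⊕ Fin 3)
  | 0 => some (Sum.inl 0)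
  | 1 => some (Sum.inl 1)
  | 2 => some (Sum.inl 1)
  | 3 => some (Sum.inr 1)
  | 4 => some (Sum.inr 2)
  | 5 => some (Sum.inr 0)
  | 6 => some (Sum.inl 2)

lemma f7_conn_inl0 : (G3.induce {a : Fin 7 | f7 a = some (Sum.inl 0)}).Connected := by
  have h : {a : Fin 7 | f7 a = some (Sum.inl 0)} = ({0} : Set (Fin 7)) := by
    ext t; fin_cases t <;> simp [f7]
  rw [h]; exact induce_connected_singleton G3 0
lemma f7_conn_inl1 : (G3.induce {a : Fin 7 | f7 a = some (Sum.inl 1)}).Connected := by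
  have h : {a : Fin 7 | f7 a = some (Sum.inl 1)} = ({1, 2} : Set (Fin 7)) := by
    ext t; fin_cases t <;> simp [f7]
  rw [h]; exact induce_connected_pair G3 (by decide : G3.Adj 1 2)
lemma f7_conn_inl2 : (G3.induce {a : Fin 7 | f7 a = some (Sum.inl 2)}).Connected := by
  have h : {a : Fin 7 | f7 a = some (Sum.inl 2)} = ({6} : Set (Fin 7)) := by
    ext t; fin_cases t <;> simp [f7]
  rw [h]; exact induce_connected_singleton G3 6
lemma f7_conn_inr0 : (G3.induce {a : Fin 7 | f7 a = some (Sum.inr 0)}).Connected := by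
  have h : {a : Fin 7 | f7 a = some (Sum.inr 0)} = ({5} : Set (Fin 7)) := by
    ext t; fin_cases t <;> simp [f7]
  rw [h]; exact induce_connected_singleton G3 5
lemma f7_conn_inr1 : (G3.induce {a : Fin 7 | f7 a = some (Sum.inr 1)}).Connected := by
  have h : {a : Fin 7 | f7 a = some (Sum.inr 1)} = ({3} : Set (Fin 7)) := by
    ext t; fin_cases t <;> simp [f7]
  rw [h]; exact induce_connected_singleton G3 3
lemma f7_conn_inr2 : (G3.induce {a : Fin 7 | f7 a = some (Sum.inr 2)}).Connected := by
  have h : {a : Fin 7 | f7 a = some (Sum.inr 2)} = ({4} : Set (Fin 7)) := by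
    ext t; fin_cases t <;> simp [f7]
  rw [h]; exact induce_connected_singleton G3 4

/-- `K₃,₃⁻` is a minor of `G₃`. -/
theorem K33minus_isMinor_G3 : IsMinor K33minus G3 := by
  refine ⟨f7, ?_, ?_, ?_⟩
  · decide
  · rintro (b | b) <;> fin_cases b
    · exact f7_conn_inl0
    · exact f7_conn_inl1
    · exact f7_conn_inl2
    · exact f7_conn_inr0
    · exact f7_conn_inr1
    · exact f7_conn_inr2
  · decide
end
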